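/- For any reals m > 0, l ≥ 1, r₀ > 0, r ∈ (0, r₀], s ∈ (0, rl − 2], and n ≥ e^{2 m r₀}, the series ∑_{i=1}^∞ i^s (log i)^m / (i^r + n)^l is bounded above by 4 · n^{(1 + s − l r)/r} · (log n)^m / r^m. -/

import Mathlib

private lemma aux_logpow {m L N x : ℝ} (hm : 0 < m) (hL : 2 * m ≤ L) (hN : 0 < N)
    (hlogN : Real.log N = L) (hx : N ≤ x) :
    Real.log x ^ m ≤ L ^ m * x ^ (1/2 : ℝ) / N ^ (1/2 : ℝ) := by
  have hL0 : 0 < L := by linarith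
  have hx0 : 0 < x := lt_of_lt_of_le hN hx
  set u := Real.log x with hu
  have huL : L ≤ u := by rw [← hlogN]; exact Real.log_le_log hN hx
  have hu0 : 0 < u := lt_of_lt_of_le hL0 huL
  have h2 : (u / L) ^ m ≤ Real.exp ((u - L) / 2) := by
    rw [Real.rpow_def_of_pos (by positivity)]
    apply Real.exp_le_exp.mpr
    have hlt : Real.log (u / L) ≤ u / L - 1 := Real.log_le_sub_one_of_pos (by positivity)
    have h3 : Real.log (u / L) * m ≤ (u / L - 1) * m := mul_le_mul_of_nonneg_right hlt hm.le
    refine h3.trans ?_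
    rw [div_sub_one hL0.ne', div_mul_eq_mul_div, div_le_div_iff₀ hL0 (by norm_num : (0:ℝ) < 2)]
    nlinarith [mul_le_mul_of_nonneg_left hL (sub_nonneg.mpr huL)]
  have h1 : u ^ m = L ^ m * (u / L) ^ m := by
    rw [← Real.mul_rpow hL0.le (by positivity)]
    congr 1
    field_simp
  calc u ^ m = L ^ m * (u / L) ^ m := h1
  _ ≤ L ^ m * Real.exp ((u - L) / 2) := mul_le_mul_of_nonneg_left h2 (by positivity)
  _ = L ^ m * x ^ (1/2 : ℝ) / N ^ (1/2 : ℝ) := by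
      rw [Real.rpow_def_of_pos hx0, Real.rpow_def_of_pos hN, hlogN, mul_div_assoc,
        ← Real.exp_sub, ← hu]
      congr 2
      ring

private lemma aux_tel {c x : ℝ} (hc : 3/2 ≤ c) (hx : 1 ≤ x) :
    (c - 1) * (x + 1) ^ (-c) ≤ x ^ (1 - c) - (x + 1) ^ (1 - c) := by
  have hx0 : 0 < x := by linarith
  have hx1 : 0 < x + 1 := by linarith
  set t := x / (x + 1) with ht
  have ht0 : 0 < t := by positivity
  have hkey : 1 + (c - 1) * (1 - t) ≤ t ^ (1 - c) := by
    rw [Real.rpow_def_of_pos ht0]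
    refine le_trans ?_ (Real.add_one_le_exp _)
    have hlog : Real.log t ≤ t - 1 := Real.log_le_sub_one_of_pos ht0
    nlinarith [mul_le_mul_of_nonneg_left hlog (by linarith : (0:ℝ) ≤ c - 1)]
  have hsplit : x ^ (1 - c) = (x + 1) ^ (1 - c) * t ^ (1 - c) := by
    rw [← Real.mul_rpow hx1.le ht0.le]
    congr 1
    rw [ht]
    field_simp
  have h1t : 1 - t = (x + 1)⁻¹ := by rw [ht]; field_simp; ring
  have hP0 : (0:ℝ) ≤ (x + 1) ^ (1 - c) := Real.rpow_nonneg hx1.le _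
  have step : (x + 1) ^ (1 - c) * ((c - 1) * (1 - t)) ≤ (x + 1) ^ (1 - c) * (t ^ (1 - c) - 1) :=
    mul_le_mul_of_nonneg_left (by linarith) hP0
  have hpow : (x + 1) ^ (1 - c) * (x + 1)⁻¹ = (x + 1) ^ (-c) := by
    rw [← Real.rpow_neg_one (x + 1), ← Real.rpow_add hx1]
    congr 1
    ring
  calc (c - 1) * (x + 1) ^ (-c) = (x + 1) ^ (1 - c) * ((c - 1) * (1 - t)) := by
        rw [h1t, ← hpow]; ring
  _ ≤ (x + 1) ^ (1 - c) * (t ^ (1 - c) - 1) := step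
  _ = x ^ (1 - c) - (x + 1) ^ (1 - c) := by rw [hsplit]; ring

/-- Lemma 9.2 (case m > 0): for m > 0, l ≥ 1, r₀ > 0, r ∈ (0, r₀], s ∈ (0, rl − 2],
and n ≥ e^{2 m r₀},
∑_{i=1}^∞ i^s (log i)^m / (i^r + n)^l ≤ 4 n^{(1+s−lr)/r} (log n)^m / r^m. -/
theorem stmt_2 (m l r₀ r s n : ℝ) (hm : 0 < m) (hl : 1 ≤ l) (hr₀ : 0 < r₀)
    (hr : 0 < r) (hrr₀ : r ≤ r₀) (hs : 0 < s) (hs2 : s ≤ r * l - 2)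
    (hn : Real.exp (2 * m * r₀) ≤ n) :
    ∑' i : ℕ, ((i : ℝ) + 1) ^ s * Real.log ((i : ℝ) + 1) ^ m / ((((i : ℝ) + 1) ^ r + n) ^ l)
      ≤ 4 * n ^ ((1 + s - l * r) / r) * Real.log n ^ m / r ^ m := by
  have hn0 : 0 < n := lt_of_lt_of_le (Real.exp_pos _) hn
  have hn1 : 1 < n := by
    refine lt_of_lt_of_le ?_ hn
    rw [show (1:ℝ) = Real.exp 0 from Real.exp_zero.symm]
    exact Real.exp_lt_exp.mpr (by positivity)
  have hlogn : 2 * m * r₀ ≤ Real.log n := (Real.le_log_iff_exp_le hn0).mpr hn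
  have hlogn0 : 0 < Real.log n := lt_of_lt_of_le (by positivity) hlogn
  set L : ℝ := Real.log n / r with hLdef
  clear_value L
  have hL0 : 0 < L := by rw [hLdef]; positivity
  have hL : 2 * m ≤ L := by
    rw [hLdef, le_div_iff₀ hr]
    nlinarith
  set N : ℝ := n ^ (1/r : ℝ) with hNdef
  clear_value N
  have hN0 : 0 < N := by rw [hNdef]; exact Real.rpow_pos_of_pos hn0 _
  have hlogN : Real.log N = L := by rw [hNdef, Real.log_rpow hn0, hLdef]; ring
  have hN1 : 1 < N := by
    rw [hNdef]
    exact (Real.one_lt_rpow_iff_of_pos hn0).mpr (Or.inl ⟨hn1, by positivity⟩)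
  set a : ℝ := r * l - s with hadef
  clear_value a
  have ha2 : 2 ≤ a := by rw [hadef]; linarith
  set c : ℝ := a - 1/2 with hcdef
  clear_value c
  have hc : 3/2 ≤ c := by rw [hcdef]; linarith
  set f : ℕ → ℝ := fun i =>
    ((i : ℝ) + 1) ^ s * Real.log ((i : ℝ) + 1) ^ m / ((((i : ℝ) + 1) ^ r + n) ^ l) with hfdef
  clear_value f
  have hf_nonneg : ∀ i : ℕ, 0 ≤ f i := by
    intro i
    have hv1 : (1:ℝ) ≤ (i:ℝ) + 1 := by linarith [Nat.cast_nonneg (α := ℝ) i]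
    have hlognn : 0 ≤ Real.log ((i:ℝ) + 1) := Real.log_nonneg hv1
    have h1 : (0:ℝ) < ((i:ℝ)+1) ^ r + n := by positivity
    simp only [hfdef]
    positivity
  have hden : ∀ i : ℕ, ((i:ℝ) + 1) ^ (r * l) ≤ (((i:ℝ) + 1) ^ r + n) ^ l := by
    intro i
    have hv0 : (0:ℝ) ≤ (i:ℝ) + 1 := by positivity
    rw [Real.rpow_mul hv0]
    exact Real.rpow_le_rpow (Real.rpow_nonneg hv0 _)
      (le_add_of_nonneg_right hn0.le) (by linarith)
  have hcomp : ∀ i : ℕ, f i ≤ (2*m) ^ m * ((i:ℝ) + 1) ^ (1/2 - a) := by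
    intro i
    have hv1 : (1:ℝ) ≤ (i:ℝ) + 1 := by linarith [Nat.cast_nonneg (α := ℝ) i]
    have hv0 : (0:ℝ) < (i:ℝ) + 1 := by linarith
    have hlognn : 0 ≤ Real.log ((i:ℝ) + 1) := Real.log_nonneg hv1
    have hlog2 : Real.log ((i:ℝ)+1) ≤ 2*m * ((i:ℝ)+1) ^ (1/(2*m)) := by
      have h := Real.log_le_rpow_div hv0.le (show (0:ℝ) < 1/(2*m) by positivity)
      rw [div_eq_mul_inv, one_div, inv_inv] at h
      rw [show ((2*m)⁻¹ : ℝ) = 1/(2*m) from (one_div _).symm] at h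
      linarith
    have hlogpow : Real.log ((i:ℝ)+1) ^ m ≤ (2*m) ^ m * ((i:ℝ)+1) ^ (1/2 : ℝ) := by
      calc Real.log ((i:ℝ)+1) ^ m ≤ (2*m*((i:ℝ)+1)^(1/(2*m))) ^ m :=
            Real.rpow_le_rpow hlognn hlog2 hm.le
      _ = (2*m) ^ m * (((i:ℝ)+1)^(1/(2*m))) ^ m :=
            Real.mul_rpow (by positivity) (Real.rpow_nonneg hv0.le _)
      _ = (2*m) ^ m * ((i:ℝ)+1) ^ (1/2 : ℝ) := by
            rw [← Real.rpow_mul hv0.le]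
            congr 2
            field_simp
    have hexp : s + 1/2 - r*l = 1/2 - a := by rw [hadef]; ring
    calc f i ≤ ((i:ℝ)+1)^s * ((2*m)^m * ((i:ℝ)+1)^(1/2:ℝ)) / ((i:ℝ)+1)^(r*l) := by
          simp only [hfdef]
          gcongr
          all_goals first
            | exact hlogpow
            | exact hden i
            | exact Real.rpow_nonneg hlognn _
            | exact Real.rpow_nonneg hv0.le _
            | positivity
    _ = (2*m)^m * (((i:ℝ)+1)^s * ((i:ℝ)+1)^(1/2:ℝ) / ((i:ℝ)+1)^(r*l)) := by ring
    _ = (2*m)^m * ((i:ℝ)+1) ^ (1/2 - a) := by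
          rw [← Real.rpow_add hv0, ← Real.rpow_sub hv0, hexp]
  have hsummand : Summable (fun i : ℕ => ((i:ℝ) + 1) ^ (1/2 - a)) := by
    have h1 : Summable (fun k : ℕ => (k:ℝ) ^ (1/2 - a)) :=
      Real.summable_nat_rpow.mpr (by linarith)
    have h2 := (summable_nat_add_iff 1).mpr h1
    simpa using h2
  have hsum : Summable f :=
    Summable.of_nonneg_of_le hf_nonneg hcomp (hsummand.mul_left _)
  set K := ⌊N⌋₊ with hKdef
  clear_value K
  have hKN : (K:ℝ) ≤ N := by rw [hKdef]; exact Nat.floor_le hN0.le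
  have hNK : N < (K:ℝ) + 1 := by rw [hKdef]; exact Nat.lt_floor_add_one N
  -- Part A
  have hnl : n ^ l = N ^ (r*l) := by
    rw [hNdef, ← Real.rpow_mul hn0.le]
    congr 1
    field_simp
  have hA : ∑ i ∈ Finset.range K, f i ≤ N ^ (1 - a) * L ^ m := by
    have hterm : ∀ i ∈ Finset.range K, f i ≤ N ^ s * L ^ m / n ^ l := by
      intro i hi
      have hiK : (i:ℝ) + 1 ≤ N := by
        have h1 : (i:ℕ) + 1 ≤ K := Finset.mem_range.mp hi
        have h2 : ((i:ℝ) + 1) ≤ (K:ℝ) := by exact_mod_cast h1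
        linarith
      have hv1 : (1:ℝ) ≤ (i:ℝ) + 1 := by linarith [Nat.cast_nonneg (α := ℝ) i]
      have hlognn : 0 ≤ Real.log ((i:ℝ)+1) := Real.log_nonneg hv1
      have hlogle : Real.log ((i:ℝ)+1) ≤ L := by
        rw [← hlogN]; exact Real.log_le_log (by linarith) hiK
      have hadd : n ≤ ((i:ℝ)+1) ^ r + n :=
        le_add_of_nonneg_left (Real.rpow_nonneg (by positivity) _)
      simp only [hfdef]
      gcongr
      all_goals first
        | exact hiK
        | exact hlogle
        | exact hlognn
        | exact hadd
        | exact Real.rpow_le_rpow (by linarith) hiK hs.le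
        | exact Real.rpow_le_rpow hlognn hlogle hm.le
        | exact Real.rpow_le_rpow hn0.le hadd (by linarith)
        | positivity
    have hexp1 : (1:ℝ) + s - r*l = 1 - a := by rw [hadef]; ring
    calc ∑ i ∈ Finset.range K, f i ≤ (Finset.range K).card • (N ^ s * L ^ m / n ^ l) :=
          Finset.sum_le_card_nsmul _ _ _ hterm
    _ = (K:ℝ) * (N ^ s * L ^ m / n ^ l) := by
          rw [Finset.card_range, nsmul_eq_mul]
    _ ≤ N * (N ^ s * L ^ m / n ^ l) := by
          have hb : 0 ≤ N ^ s * L ^ m / n ^ l := by positivity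
          exact mul_le_mul_of_nonneg_right hKN hb
    _ = N ^ (1:ℝ) * N ^ s / N ^ (r*l) * L ^ m := by
          rw [hnl, Real.rpow_one]; ring
    _ = N ^ (1 - a) * L ^ m := by
          rw [← Real.rpow_add hN0, ← Real.rpow_sub hN0, hexp1]
  -- Part B
  have hptB : ∀ j : ℕ, N ≤ ((j:ℝ) + 1) → f j ≤ L^m / N^(1/2:ℝ) * ((j:ℝ)+1) ^ (-c) := by
    intro j hj
    have hv0 : (0:ℝ) < (j:ℝ) + 1 := lt_of_lt_of_le hN0 hj
    have hv1 : (1:ℝ) ≤ (j:ℝ) + 1 := by linarith [Nat.cast_nonneg (α := ℝ) j]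
    have hlognn : 0 ≤ Real.log ((j:ℝ)+1) := Real.log_nonneg hv1
    have hlogpow := aux_logpow hm hL hN0 hlogN hj
    have hexp2 : s + 1/2 - r*l = -c := by rw [hcdef, hadef]; ring
    calc f j ≤ ((j:ℝ)+1)^s * (L^m * ((j:ℝ)+1)^(1/2:ℝ) / N^(1/2:ℝ)) / ((j:ℝ)+1)^(r*l) := by
          simp only [hfdef]
          gcongr
          all_goals first
            | exact hlogpow
            | exact hden j
            | exact Real.rpow_nonneg hlognn _
            | exact Real.rpow_nonneg hv0.le _
            | positivity
    _ = L^m / N^(1/2:ℝ) * (((j:ℝ)+1)^s * ((j:ℝ)+1)^(1/2:ℝ) / ((j:ℝ)+1)^(r*l)) := by ring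
    _ = L^m / N^(1/2:ℝ) * ((j:ℝ)+1) ^ (-c) := by
          rw [← Real.rpow_add hv0, ← Real.rpow_sub hv0, hexp2]
  have hDnn : 0 ≤ L^m / N^(1/2:ℝ) := by positivity
  have hB : ∑' i, f (i + K) ≤ L^m / N^(1/2:ℝ) * (3 * N ^ (1 - c)) := by
    apply ((summable_nat_add_iff K).mpr hsum).tsum_le_of_sum_range_le
    intro M
    have hsum3 : ∑ i ∈ Finset.range M, (((i + K : ℕ):ℝ) + 1) ^ (-c) ≤ 3 * N ^ (1 - c) := by
      rcases M with _ | M'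
      · simp only [Finset.range_zero, Finset.sum_empty]
        positivity
      · rw [Finset.sum_range_succ']
        have e0 : (((0 + K : ℕ):ℝ) + 1) = (K:ℝ) + 1 := by push_cast; ring
        rw [e0]
        have h0 : ((K:ℝ) + 1) ^ (-c) ≤ N ^ (1 - c) := by
          calc ((K:ℝ) + 1) ^ (-c) ≤ N ^ (-c) :=
                Real.rpow_le_rpow_of_nonpos hN0 hNK.le (by linarith)
          _ ≤ N ^ (1 - c) := Real.rpow_le_rpow_of_exponent_le hN1.le (by linarith)
        have htail : ∑ i ∈ Finset.range M', (((i + 1 + K : ℕ):ℝ) + 1) ^ (-c)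
            ≤ 2 * N ^ (1 - c) := by
          set h : ℕ → ℝ := fun i => ((i:ℝ) + (K:ℝ) + 1) ^ (1 - c) with hhdef
          clear_value h
          have hstep : ∀ i : ℕ, (((i + 1 + K : ℕ):ℝ) + 1) ^ (-c) ≤ (h i - h (i+1)) / (c - 1) := by
            intro i
            have hx1 : (1:ℝ) ≤ (i:ℝ) + (K:ℝ) + 1 := by
              have h1 := Nat.cast_nonneg (α := ℝ) i
              have h2 := Nat.cast_nonneg (α := ℝ) K
              linarith
            have ht := aux_tel hc hx1
            rw [le_div_iff₀ (by linarith : (0:ℝ) < c - 1)]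
            have he1 : (((i + 1 + K : ℕ):ℝ) + 1) = ((i:ℝ) + (K:ℝ) + 1) + 1 := by
              push_cast; ring
            have he2 : h (i+1) = (((i:ℝ) + (K:ℝ) + 1) + 1) ^ (1 - c) := by
              rw [hhdef]; push_cast; ring_nf
            have he3 : h i = ((i:ℝ) + (K:ℝ) + 1) ^ (1 - c) := by rw [hhdef]
            rw [he1, he2, he3]
            calc (((i:ℝ) + (K:ℝ) + 1) + 1) ^ (-c) * (c - 1)
                = (c - 1) * (((i:ℝ) + (K:ℝ) + 1) + 1) ^ (-c) := by ring
            _ ≤ _ := ht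
          calc ∑ i ∈ Finset.range M', (((i + 1 + K : ℕ):ℝ) + 1) ^ (-c)
              ≤ ∑ i ∈ Finset.range M', (h i - h (i+1)) / (c - 1) :=
                Finset.sum_le_sum (fun i _ => hstep i)
          _ = (h 0 - h M') / (c - 1) := by
                rw [← Finset.sum_div, Finset.sum_range_sub']
          _ ≤ h 0 / (c - 1) := by
                have hM : 0 ≤ h M' := by
                  rw [hhdef]
                  exact Real.rpow_nonneg (by positivity) _
                gcongr
                all_goals linarith
          _ ≤ 2 * N ^ (1 - c) := by
                have hh0 : h 0 ≤ N ^ (1 - c) := by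
                  have he4 : h 0 = ((K:ℝ) + 1) ^ (1 - c) := by rw [hhdef]; norm_num
                  rw [he4]
                  exact Real.rpow_le_rpow_of_nonpos hN0 hNK.le (by linarith)
                have hh0nn : 0 ≤ h 0 := by
                  rw [hhdef]
                  exact Real.rpow_nonneg (by positivity) _
                rw [div_le_iff₀ (by linarith : (0:ℝ) < c - 1)]
                nlinarith [Real.rpow_nonneg hN0.le (1 - c)]
        linarith
    calc ∑ i ∈ Finset.range M, f (i + K)
        ≤ ∑ i ∈ Finset.range M, L^m / N^(1/2:ℝ) * (((i + K : ℕ):ℝ) + 1) ^ (-c) := by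
          refine Finset.sum_le_sum (fun i _ => ?_)
          refine hptB (i + K) ?_
          have h1 : (K:ℝ) ≤ ((i + K : ℕ):ℝ) := by
            exact_mod_cast Nat.le_add_left K i
          linarith
    _ = L^m / N^(1/2:ℝ) * ∑ i ∈ Finset.range M, (((i + K : ℕ):ℝ) + 1) ^ (-c) := by
          rw [Finset.mul_sum]
    _ ≤ L^m / N^(1/2:ℝ) * (3 * N ^ (1 - c)) := mul_le_mul_of_nonneg_left hsum3 hDnn
  -- assemble
  have heqB : L^m / N^(1/2:ℝ) * (3 * N ^ (1 - c)) = 3 * (N ^ (1 - a) * L ^ m) := by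
    have h1 : N ^ ((1:ℝ) - c) / N ^ (1/2:ℝ) = N ^ (1 - a) := by
      rw [← Real.rpow_sub hN0]
      congr 1
      rw [hcdef]; ring
    rw [← h1]; ring
  have htotal : ∑' i, f i ≤ 4 * (N ^ (1 - a) * L ^ m) := by
    rw [← hsum.sum_add_tsum_nat_add K]
    calc ∑ i ∈ Finset.range K, f i + ∑' i, f (i + K)
        ≤ N ^ (1 - a) * L ^ m + L^m / N^(1/2:ℝ) * (3 * N ^ (1 - c)) := add_le_add hA hB
    _ = 4 * (N ^ (1 - a) * L ^ m) := by rw [heqB]; ring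
  have hfin : N ^ (1 - a) * L ^ m = n ^ ((1 + s - l*r)/r) * Real.log n ^ m / r ^ m := by
    have h1 : N ^ ((1:ℝ) - a) = n ^ ((1 + s - l*r)/r) := by
      rw [hNdef, ← Real.rpow_mul hn0.le]
      congr 1
      rw [hadef]
      field_simp
      ring
    have h2 : L ^ m = Real.log n ^ m / r ^ m := by
      rw [hLdef, Real.div_rpow hlogn0.le hr.le]
    rw [h1, h2]
    ring
  calc ∑' i, f i ≤ 4 * (N ^ (1 - a) * L ^ m) := htotal
  _ = 4 * n ^ ((1 + s - l*r)/r) * Real.log n ^ m / r ^ m := by rw [hfin]; ring
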